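/- For the single-qubit ansatz G(φ) = exp(−iσ_X φ₃) exp(−iσ_Y φ₂) exp(−iσ_Z φ₁), the three pulled-back derivatives Ω_j(φ) = G(φ)† ∂G/∂φ_j span the Lie algebra su(2) if and only if cos(2φ₂) ≠ 0. -/

import Mathlib

open Matrix
open scoped Matrix.Norms.L2Operator

noncomputable section

/-- Pauli matrix `σ_X`. -/
def σX : Matrix (Fin 2) (Fin 2) ℂ := !![0, 1; 1, 0]
/-- Pauli matrix `σ_Y`. -/
def σY : Matrix (Fin 2) (Fin 2) ℂ := !![0, -Complex.I; Complex.I, 0]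
/-- Pauli matrix `σ_Z`. -/
def σZ : Matrix (Fin 2) (Fin 2) ℂ := !![1, 0; 0, -1]

/-- The single-qubit product-of-exponentials ansatz
`G(φ) = exp(−iσ_X φ₃) exp(−iσ_Y φ₂) exp(−iσ_Z φ₁)`. -/
def G (φ₁ φ₂ φ₃ : ℝ) : Matrix (Fin 2) (Fin 2) ℂ :=
  NormedSpace.exp ((-(Complex.I * φ₃)) • σX) *
    NormedSpace.exp ((-(Complex.I * φ₂)) • σY) *
    NormedSpace.exp ((-(Complex.I * φ₁)) • σZ)

/-- Closed form of `exp(−iσ_X t)`. -/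
def eX (t : ℝ) : Matrix (Fin 2) (Fin 2) ℂ :=
  !![(Real.cos t : ℂ), -Complex.I * Real.sin t; -Complex.I * Real.sin t, Real.cos t]
/-- Closed form of `exp(−iσ_Y t)`. -/
def eY (t : ℝ) : Matrix (Fin 2) (Fin 2) ℂ :=
  !![(Real.cos t : ℂ), -(Real.sin t : ℂ); Real.sin t, Real.cos t]
/-- Closed form of `exp(−iσ_Z t)`. -/
def eZ (t : ℝ) : Matrix (Fin 2) (Fin 2) ℂ :=
  !![(Real.cos t : ℂ) - Real.sin t * Complex.I, 0; 0, (Real.cos t : ℂ) + Real.sin t * Complex.I]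
/-- Derivative of `eX`. -/
def eX' (t : ℝ) : Matrix (Fin 2) (Fin 2) ℂ :=
  !![(-Real.sin t : ℂ), -Complex.I * Real.cos t; -Complex.I * Real.cos t, -Real.sin t]
/-- Derivative of `eY`. -/
def eY' (t : ℝ) : Matrix (Fin 2) (Fin 2) ℂ :=
  !![(-Real.sin t : ℂ), -(Real.cos t : ℂ); Real.cos t, -Real.sin t]
/-- Derivative of `eZ`. -/
def eZ' (t : ℝ) : Matrix (Fin 2) (Fin 2) ℂ :=
  !![-(Real.sin t : ℂ) - Real.cos t * Complex.I, 0; 0, -(Real.sin t : ℂ) + Real.cos t * Complex.I]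

lemma cexp_neg' (t : ℝ) :
    Complex.exp (-(Complex.I * t)) = (Real.cos t : ℂ) - Real.sin t * Complex.I := by
  rw [show -(Complex.I * (t:ℂ)) = ((-t : ℝ) : ℂ) * Complex.I by push_cast; ring, Complex.exp_mul_I]
  rw [show ((-t:ℝ):ℂ) = -(t:ℂ) by push_cast; ring, Complex.cos_neg, Complex.sin_neg]
  rw [← Complex.ofReal_cos, ← Complex.ofReal_sin]
  ring

lemma cexp_pos' (t : ℝ) :
    Complex.exp (Complex.I * t) = (Real.cos t : ℂ) + Real.sin t * Complex.I := by
  rw [show Complex.I * (t:ℂ) = ((t : ℝ) : ℂ) * Complex.I by push_cast; ring, Complex.exp_mul_I]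
  rw [← Complex.ofReal_cos, ← Complex.ofReal_sin]

lemma expZ (t : ℝ) : NormedSpace.exp ((-(Complex.I * t)) • σZ) = eZ t := by
  have h : (-(Complex.I * t)) • σZ = Matrix.diagonal ![-(Complex.I*t), Complex.I*t] := by
    ext i j
    fin_cases i <;> fin_cases j <;> simp [σZ, Matrix.diagonal] <;> ring
  rw [h, Matrix.exp_diagonal]
  ext i j
  fin_cases i <;> fin_cases j <;>
    simp [Matrix.diagonal, eZ, Pi.coe_exp, ← Complex.exp_eq_exp_ℂ, cexp_neg', cexp_pos']

/-- The conjugation matrix relating `σ_Z` and `σ_X`, as a unit. -/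
def Ux : (Matrix (Fin 2) (Fin 2) ℂ)ˣ where
  val := !![1, 1; 1, -1]
  inv := !![2⁻¹, 2⁻¹; 2⁻¹, -2⁻¹]
  val_inv := by
    ext i j
    fin_cases i <;> fin_cases j <;> simp [Matrix.mul_apply, Fin.sum_univ_two] <;> norm_num
  inv_val := by
    ext i j
    fin_cases i <;> fin_cases j <;> simp [Matrix.mul_apply, Fin.sum_univ_two] <;> norm_num

lemma expX (t : ℝ) : NormedSpace.exp ((-(Complex.I * t)) • σX) = eX t := by
  have h : (-(Complex.I * t)) • σX
      = (Ux : Matrix (Fin 2) (Fin 2) ℂ) * ((-(Complex.I * t)) • σZ)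
        * (↑Ux⁻¹ : Matrix (Fin 2) (Fin 2) ℂ) := by
    ext i j
    fin_cases i <;> fin_cases j <;>
      simp [σX, σZ, Ux, Matrix.mul_apply, Fin.sum_univ_two] <;> ring
  rw [h, Matrix.exp_units_conj, expZ]
  ext i j
  fin_cases i <;> fin_cases j <;>
    simp [eX, eZ, Ux, Matrix.mul_apply, Fin.sum_univ_two] <;> ring

/-- The conjugation matrix relating `σ_X` and `σ_Y`, as a unit. -/
def Uy : (Matrix (Fin 2) (Fin 2) ℂ)ˣ where
  val := !![1, 0; 0, Complex.I]
  inv := !![1, 0; 0, -Complex.I]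
  val_inv := by
    ext i j
    fin_cases i <;> fin_cases j <;> simp [Matrix.mul_apply, Fin.sum_univ_two]
  inv_val := by
    ext i j
    fin_cases i <;> fin_cases j <;> simp [Matrix.mul_apply, Fin.sum_univ_two]

lemma expY (t : ℝ) : NormedSpace.exp ((-(Complex.I * t)) • σY) = eY t := by
  have h : (-(Complex.I * t)) • σY
      = (Uy : Matrix (Fin 2) (Fin 2) ℂ) * ((-(Complex.I * t)) • σX)
        * (↑Uy⁻¹ : Matrix (Fin 2) (Fin 2) ℂ) := by
    ext i j
    fin_cases i <;> fin_cases j <;>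
      simp [σX, σY, Uy, Matrix.mul_apply, Fin.sum_univ_two] <;> ring
  rw [h, Matrix.exp_units_conj, expX]
  ext i j
  fin_cases i <;> fin_cases j <;>
    simp [eX, eY, Uy, Matrix.mul_apply, Fin.sum_univ_two] <;> ring_nf <;>
    simp [Complex.I_sq] <;> ring_nf

lemma G_eq (φ₁ φ₂ φ₃ : ℝ) : G φ₁ φ₂ φ₃ = eX φ₃ * eY φ₂ * eZ φ₁ := by
  rw [G, expX, expY, expZ]

lemma hG1 (φ₁ φ₂ φ₃ : ℝ) : HasDerivAt (fun t => G t φ₂ φ₃) (eX φ₃ * eY φ₂ * eZ' φ₁) φ₁ := by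
  have e1 : (fun t : ℝ => G t φ₂ φ₃)
      = fun t => Real.cos t • (eX φ₃ * eY φ₂)
          + Real.sin t • (eX φ₃ * eY φ₂ * !![-Complex.I, 0; 0, Complex.I]) := by
    funext t
    rw [G_eq]
    ext i j
    fin_cases i <;> fin_cases j <;>
      simp [eX, eY, eZ, Matrix.mul_apply, Fin.sum_univ_two, Complex.real_smul] <;> ring
  rw [e1]
  have h := ((Real.hasDerivAt_cos φ₁).smul_const (eX φ₃ * eY φ₂)).add
    ((Real.hasDerivAt_sin φ₁).smul_const (eX φ₃ * eY φ₂ * !![-Complex.I, 0; 0, Complex.I]))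
  refine HasDerivAt.congr_deriv h ?_
  ext i j
  fin_cases i <;> fin_cases j <;>
    simp [eX, eY, eZ', Matrix.mul_apply, Fin.sum_univ_two, Complex.real_smul] <;> ring

lemma hG2 (φ₁ φ₂ φ₃ : ℝ) : HasDerivAt (fun t => G φ₁ t φ₃) (eX φ₃ * eY' φ₂ * eZ φ₁) φ₂ := by
  have e1 : (fun t : ℝ => G φ₁ t φ₃)
      = fun t => Real.cos t • (eX φ₃ * eZ φ₁)
          + Real.sin t • (eX φ₃ * !![0, -1; 1, 0] * eZ φ₁) := by
    funext t
    rw [G_eq]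
    ext i j
    fin_cases i <;> fin_cases j <;>
      simp [eX, eY, eZ, Matrix.mul_apply, Fin.sum_univ_two, Complex.real_smul] <;> ring
  rw [e1]
  have h := ((Real.hasDerivAt_cos φ₂).smul_const (eX φ₃ * eZ φ₁)).add
    ((Real.hasDerivAt_sin φ₂).smul_const (eX φ₃ * !![0, -1; 1, 0] * eZ φ₁))
  refine HasDerivAt.congr_deriv h ?_
  ext i j
  fin_cases i <;> fin_cases j <;>
    simp [eX, eY', eZ, Matrix.mul_apply, Fin.sum_univ_two, Complex.real_smul] <;> ring

lemma hG3 (φ₁ φ₂ φ₃ : ℝ) : HasDerivAt (fun t => G φ₁ φ₂ t) (eX' φ₃ * eY φ₂ * eZ φ₁) φ₃ := by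
  have e1 : (fun t : ℝ => G φ₁ φ₂ t)
      = fun t => Real.cos t • (eY φ₂ * eZ φ₁)
          + Real.sin t • (!![0, -Complex.I; -Complex.I, 0] * (eY φ₂ * eZ φ₁)) := by
    funext t
    rw [G_eq]
    ext i j
    fin_cases i <;> fin_cases j <;>
      simp [eX, eY, eZ, Matrix.mul_apply, Fin.sum_univ_two, Complex.real_smul] <;> ring
  rw [e1]
  have h := ((Real.hasDerivAt_cos φ₃).smul_const (eY φ₂ * eZ φ₁)).add
    ((Real.hasDerivAt_sin φ₃).smul_const (!![0, -Complex.I; -Complex.I, 0] * (eY φ₂ * eZ φ₁)))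
  refine HasDerivAt.congr_deriv h ?_
  ext i j
  fin_cases i <;> fin_cases j <;>
    simp [eX', eY, eZ, Matrix.mul_apply, Fin.sum_univ_two, Complex.real_smul] <;> ring

lemma eXu (t : ℝ) : (eX t)ᴴ * eX t = 1 := by
  ext i j
  fin_cases i <;> fin_cases j <;>
    simp [eX, Matrix.mul_apply, Fin.sum_univ_two, Matrix.conjTranspose_apply,
      Matrix.one_apply, Complex.ext_iff, Complex.cos_ofReal_re, Complex.sin_ofReal_re,
      Complex.cos_ofReal_im, Complex.sin_ofReal_im, -Complex.ofReal_cos, -Complex.ofReal_sin,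
      ← Complex.ofReal_pow] <;>
    (try constructor) <;>
    nlinarith [Real.sin_sq_add_cos_sq t]

lemma eYu (t : ℝ) : (eY t)ᴴ * eY t = 1 := by
  ext i j
  fin_cases i <;> fin_cases j <;>
    simp [eY, Matrix.mul_apply, Fin.sum_univ_two, Matrix.conjTranspose_apply,
      Matrix.one_apply, Complex.ext_iff, Complex.cos_ofReal_re, Complex.sin_ofReal_re,
      Complex.cos_ofReal_im, Complex.sin_ofReal_im, -Complex.ofReal_cos, -Complex.ofReal_sin,
      ← Complex.ofReal_pow] <;>
    (try constructor) <;>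
    nlinarith [Real.sin_sq_add_cos_sq t]

lemma eYdY (t : ℝ) : (eY t)ᴴ * eY' t = !![0, -1; 1, 0] := by
  ext i j
  fin_cases i <;> fin_cases j <;>
    simp [eY, eY', Matrix.mul_apply, Fin.sum_univ_two, Matrix.conjTranspose_apply,
      Complex.ext_iff, Complex.cos_ofReal_re, Complex.sin_ofReal_re,
      Complex.cos_ofReal_im, Complex.sin_ofReal_im, -Complex.ofReal_cos, -Complex.ofReal_sin,
      ← Complex.ofReal_pow] <;>
    (try constructor) <;>
    nlinarith [Real.sin_sq_add_cos_sq t]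

lemma eXdX (t : ℝ) : (eX t)ᴴ * eX' t = !![0, -Complex.I; -Complex.I, 0] := by
  ext i j
  fin_cases i <;> fin_cases j <;>
    simp [eX, eX', Matrix.mul_apply, Fin.sum_univ_two, Matrix.conjTranspose_apply,
      Complex.ext_iff, Complex.cos_ofReal_re, Complex.sin_ofReal_re,
      Complex.cos_ofReal_im, Complex.sin_ofReal_im, -Complex.ofReal_cos, -Complex.ofReal_sin,
      ← Complex.ofReal_pow] <;>
    (try constructor) <;>
    nlinarith [Real.sin_sq_add_cos_sq t]

lemma omegaA (φ₁ φ₂ φ₃ : ℝ) :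
    (eX φ₃ * eY φ₂ * eZ φ₁)ᴴ * (eX φ₃ * eY φ₂ * eZ' φ₁) = (-1 : ℝ) • (Complex.I • σZ) := by
  simp only [Matrix.conjTranspose_mul, Matrix.mul_assoc]
  rw [← Matrix.mul_assoc ((eX φ₃)ᴴ) (eX φ₃), eXu, Matrix.one_mul,
    ← Matrix.mul_assoc ((eY φ₂)ᴴ) (eY φ₂), eYu, Matrix.one_mul]
  ext i j
  fin_cases i <;> fin_cases j <;>
    simp [eZ, eZ', σZ, Matrix.mul_apply, Fin.sum_univ_two, Matrix.conjTranspose_apply,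
      Complex.real_smul, Complex.ext_iff, Complex.cos_ofReal_re, Complex.sin_ofReal_re,
      Complex.cos_ofReal_im, Complex.sin_ofReal_im, -Complex.ofReal_cos, -Complex.ofReal_sin,
      ← Complex.ofReal_pow] <;>
    (try constructor) <;>
    nlinarith [Real.sin_sq_add_cos_sq φ₁]

lemma omegaB (φ₁ φ₂ φ₃ : ℝ) :
    (eX φ₃ * eY φ₂ * eZ φ₁)ᴴ * (eX φ₃ * eY' φ₂ * eZ φ₁) =
      (-Real.sin (2*φ₁)) • (Complex.I • σX) + (-Real.cos (2*φ₁)) • (Complex.I • σY) := by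
  simp only [Matrix.conjTranspose_mul, Matrix.mul_assoc]
  rw [← Matrix.mul_assoc ((eX φ₃)ᴴ) (eX φ₃), eXu, Matrix.one_mul,
    ← Matrix.mul_assoc ((eY φ₂)ᴴ) (eY' φ₂), eYdY]
  rw [Real.sin_two_mul, Real.cos_two_mul']
  ext i j
  fin_cases i <;> fin_cases j <;>
    simp [eZ, σX, σY, Matrix.mul_apply, Fin.sum_univ_two, Matrix.conjTranspose_apply,
      Complex.real_smul, Complex.ext_iff, Complex.cos_ofReal_re, Complex.sin_ofReal_re,
      Complex.cos_ofReal_im, Complex.sin_ofReal_im, -Complex.ofReal_cos, -Complex.ofReal_sin,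
      ← Complex.ofReal_pow] <;>
    (try constructor) <;>
    nlinarith [Real.sin_sq_add_cos_sq φ₁]

lemma omegaC (φ₁ φ₂ φ₃ : ℝ) :
    (eX φ₃ * eY φ₂ * eZ φ₁)ᴴ * (eX' φ₃ * eY φ₂ * eZ φ₁) =
      (-(Real.cos (2*φ₂) * Real.cos (2*φ₁))) • (Complex.I • σX) +
      (Real.cos (2*φ₂) * Real.sin (2*φ₁)) • (Complex.I • σY) +
      (-Real.sin (2*φ₂)) • (Complex.I • σZ) := by
  simp only [Matrix.conjTranspose_mul, Matrix.mul_assoc]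
  rw [← Matrix.mul_assoc ((eX φ₃)ᴴ) (eX' φ₃), eXdX]
  rw [Real.sin_two_mul, Real.cos_two_mul', Real.sin_two_mul, Real.cos_two_mul']
  ext i j
  fin_cases i <;> fin_cases j <;>
    simp [eY, eZ, σX, σY, σZ, Matrix.mul_apply, Fin.sum_univ_two, Matrix.conjTranspose_apply,
      Complex.real_smul, Complex.ext_iff, Complex.cos_ofReal_re, Complex.sin_ofReal_re,
      Complex.cos_ofReal_im, Complex.sin_ofReal_im, -Complex.ofReal_cos, -Complex.ofReal_sin,
      ← Complex.ofReal_pow] <;>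
    (try constructor) <;>
    first
      | nlinarith [Real.sin_sq_add_cos_sq φ₁, Real.sin_sq_add_cos_sq φ₂]
      | linear_combination (-2*Real.cos φ₂*Real.sin φ₂) * Real.sin_sq_add_cos_sq φ₁
      | linear_combination (2*Real.cos φ₂*Real.sin φ₂) * Real.sin_sq_add_cos_sq φ₁

/-- An auxiliary real-linear functional on 2×2 complex matrices. -/
def Lfun (a b : ℝ) : Matrix (Fin 2) (Fin 2) ℂ →ₗ[ℝ] ℝ where
  toFun M := a * (M 0 1).im - b * (M 0 1).re
  map_add' M N := by simp [Matrix.add_apply]; ring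
  map_smul' r M := by
    simp [Matrix.smul_apply, Complex.real_smul]
    ring

set_option maxHeartbeats 2000000 in
theorem span_part (φ₁ φ₂ : ℝ) :
    Submodule.span ℝ
        ({(-1 : ℝ) • (Complex.I • σZ),
          (-Real.sin (2*φ₁)) • (Complex.I • σX) + (-Real.cos (2*φ₁)) • (Complex.I • σY),
          (-(Real.cos (2*φ₂) * Real.cos (2*φ₁))) • (Complex.I • σX) +
            (Real.cos (2*φ₂) * Real.sin (2*φ₁)) • (Complex.I • σY) +
            (-Real.sin (2*φ₂)) • (Complex.I • σZ)} :
          Set (Matrix (Fin 2) (Fin 2) ℂ)) =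
      Submodule.span ℝ
        ({Complex.I • σX, Complex.I • σY, Complex.I • σZ} : Set (Matrix (Fin 2) (Fin 2) ℂ)) ↔
      Real.cos (2 * φ₂) ≠ 0 := by
  set S1 := Real.sin (2*φ₁) with hS1
  set C1 := Real.cos (2*φ₁) with hC1
  set S2 := Real.sin (2*φ₂) with hS2
  set C2 := Real.cos (2*φ₂) with hC2
  have hp1 : S1^2 + C1^2 = 1 := Real.sin_sq_add_cos_sq (2*φ₁)
  set X := Complex.I • σX with hX
  set Y := Complex.I • σY with hY
  set Z := Complex.I • σZ with hZ
  set g₁ : Matrix (Fin 2) (Fin 2) ℂ := (-1 : ℝ) • Z with hg₁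
  set g₂ : Matrix (Fin 2) (Fin 2) ℂ := (-S1) • X + (-C1) • Y with hg₂
  set g₃ : Matrix (Fin 2) (Fin 2) ℂ := (-(C2 * C1)) • X + (C2 * S1) • Y + (-S2) • Z with hg₃
  have hg₁m : g₁ ∈ ({g₁, g₂, g₃} : Set (Matrix (Fin 2) (Fin 2) ℂ)) := Set.mem_insert _ _
  have hg₂m : g₂ ∈ ({g₁, g₂, g₃} : Set (Matrix (Fin 2) (Fin 2) ℂ)) :=
    Set.mem_insert_of_mem _ (Set.mem_insert _ _)
  have hg₃m : g₃ ∈ ({g₁, g₂, g₃} : Set (Matrix (Fin 2) (Fin 2) ℂ)) :=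
    Set.mem_insert_of_mem _ (Set.mem_insert_of_mem _ rfl)
  have hXm : X ∈ ({X, Y, Z} : Set (Matrix (Fin 2) (Fin 2) ℂ)) := Set.mem_insert _ _
  have hYm : Y ∈ ({X, Y, Z} : Set (Matrix (Fin 2) (Fin 2) ℂ)) :=
    Set.mem_insert_of_mem _ (Set.mem_insert _ _)
  have hZm : Z ∈ ({X, Y, Z} : Set (Matrix (Fin 2) (Fin 2) ℂ)) :=
    Set.mem_insert_of_mem _ (Set.mem_insert_of_mem _ rfl)
  constructor
  · intro hspan
    by_contra hc0
    have hv : C1 • X + (-S1) • Y ∈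
        Submodule.span ℝ ({X, Y, Z} : Set (Matrix (Fin 2) (Fin 2) ℂ)) :=
      add_mem (Submodule.smul_mem _ _ (Submodule.subset_span hXm))
        (Submodule.smul_mem _ _ (Submodule.subset_span hYm))
    rw [← hspan] at hv
    have hle : Submodule.span ℝ ({g₁, g₂, g₃} : Set (Matrix (Fin 2) (Fin 2) ℂ)) ≤
        LinearMap.ker (Lfun C1 S1) := by
      rw [Submodule.span_le]
      intro M hM
      simp only [Set.mem_insert_iff, Set.mem_singleton_iff] at hM
      rcases hM with rfl | rfl | rfl <;>
        simp [Lfun, hg₁, hg₂, hg₃, hX, hY, hZ, σX, σY, σZ, Matrix.smul_apply, Matrix.add_apply,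
          Complex.real_smul, hc0] <;>
        ring
    have h0 : Lfun C1 S1 (C1 • X + (-S1) • Y) = 0 := LinearMap.mem_ker.mp (hle hv)
    have h1 : Lfun C1 S1 (C1 • X + (-S1) • Y) = C1^2 + S1^2 := by
      simp [Lfun, hX, hY, σX, σY, Matrix.smul_apply, Matrix.add_apply, Complex.real_smul]
      ring
    rw [h1] at h0
    nlinarith [hp1]
  · intro hc
    apply le_antisymm
    · rw [Submodule.span_le]
      intro M hM
      simp only [Set.mem_insert_iff, Set.mem_singleton_iff] at hM
      have sX := Submodule.subset_span (R := ℝ) hXm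
      have sY := Submodule.subset_span (R := ℝ) hYm
      have sZ := Submodule.subset_span (R := ℝ) hZm
      rcases hM with rfl | rfl | rfl
      · exact Submodule.smul_mem _ _ sZ
      · exact add_mem (Submodule.smul_mem _ _ sX) (Submodule.smul_mem _ _ sY)
      · exact add_mem (add_mem (Submodule.smul_mem _ _ sX) (Submodule.smul_mem _ _ sY))
          (Submodule.smul_mem _ _ sZ)
    · rw [Submodule.span_le]
      intro M hM
      simp only [Set.mem_insert_iff, Set.mem_singleton_iff] at hM
      have s₁ := Submodule.subset_span (R := ℝ) hg₁m
      have s₂ := Submodule.subset_span (R := ℝ) hg₂m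
      have s₃ := Submodule.subset_span (R := ℝ) hg₃m
      rcases hM with rfl | rfl | rfl
      · have e : X = (C2⁻¹ * (C1*S2)) • g₁ + (-S1) • g₂ + (C2⁻¹ * (-C1)) • g₃ := by
          rw [hg₁, hg₂, hg₃]
          ext i j
          fin_cases i <;> fin_cases j <;>
            simp [hX, hY, hZ, σX, σY, σZ, Matrix.smul_apply, Matrix.add_apply,
              Complex.real_smul, Complex.ext_iff] <;>
            (try constructor) <;>
            field_simp <;>
            first
              | ring1
              | linear_combination hp1
              | linear_combination C2 * hp1
              | linear_combination (-C2) * hp1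
              | linear_combination (-1 : ℝ) * hp1
        rw [e]
        exact add_mem (add_mem (Submodule.smul_mem _ _ s₁) (Submodule.smul_mem _ _ s₂))
          (Submodule.smul_mem _ _ s₃)
      · have e : Y = (C2⁻¹ * (-(S1*S2))) • g₁ + (-C1) • g₂ + (C2⁻¹ * S1) • g₃ := by
          rw [hg₁, hg₂, hg₃]
          ext i j
          fin_cases i <;> fin_cases j <;>
            simp [hX, hY, hZ, σX, σY, σZ, Matrix.smul_apply, Matrix.add_apply,
              Complex.real_smul, Complex.ext_iff] <;>
            (try constructor) <;>
            field_simp <;>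
            first
              | ring1
              | linear_combination hp1
              | linear_combination C2 * hp1
              | linear_combination (-C2) * hp1
              | linear_combination (-1 : ℝ) * hp1
        rw [e]
        exact add_mem (add_mem (Submodule.smul_mem _ _ s₁) (Submodule.smul_mem _ _ s₂))
          (Submodule.smul_mem _ _ s₃)
      · have e : Z = (-1 : ℝ) • g₁ := by rw [hg₁]; ext i j; simp [Matrix.smul_apply]
        rw [e]
        exact Submodule.smul_mem _ _ s₁

/-- The pulled-back derivatives `Ω_j(φ) = G(φ)† ∂G/∂φ_j` of the single-qubit
ansatz span `su(2)` (the real span of `iσ_X, iσ_Y, iσ_Z`) iff `cos(2φ₂) ≠ 0`. -/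
theorem single_qubit_omegas_span_iff_cos_ne_zero
    (φ₁ φ₂ φ₃ : ℝ) (D₁ D₂ D₃ : Matrix (Fin 2) (Fin 2) ℂ)
    (h₁ : HasDerivAt (fun t => G t φ₂ φ₃) D₁ φ₁)
    (h₂ : HasDerivAt (fun t => G φ₁ t φ₃) D₂ φ₂)
    (h₃ : HasDerivAt (fun t => G φ₁ φ₂ t) D₃ φ₃) :
    Submodule.span ℝ
        ({(G φ₁ φ₂ φ₃)ᴴ * D₁, (G φ₁ φ₂ φ₃)ᴴ * D₂, (G φ₁ φ₂ φ₃)ᴴ * D₃} :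
          Set (Matrix (Fin 2) (Fin 2) ℂ)) =
      Submodule.span ℝ
        ({Complex.I • σX, Complex.I • σY, Complex.I • σZ} : Set (Matrix (Fin 2) (Fin 2) ℂ)) ↔
      Real.cos (2 * φ₂) ≠ 0 := by
  have d1 : D₁ = eX φ₃ * eY φ₂ * eZ' φ₁ := h₁.unique (hG1 φ₁ φ₂ φ₃)
  have d2 : D₂ = eX φ₃ * eY' φ₂ * eZ φ₁ := h₂.unique (hG2 φ₁ φ₂ φ₃)
  have d3 : D₃ = eX' φ₃ * eY φ₂ * eZ φ₁ := h₃.unique (hG3 φ₁ φ₂ φ₃)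
  rw [G_eq, d1, d2, d3, omegaA, omegaB, omegaC]
  exact span_part φ₁ φ₂

end
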